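/- Let K1, F1, Z1, S1 be positive integers with Z1 < F1 such that g = K1(F1−Z1)/S1 is a positive integer, and suppose there exists a g-regular (K1,F1,Z1,S1) placement delivery array satisfying Condition 1 with parameter λ. Then for every positive integer m there exists an (m·g)-regular (m·K1, λ·(F1/λ)^m, Z1·(F1/λ)^{m−1}, S1·(F1/λ)^{m−1}) placement delivery array. -/

import Mathlib

/-- A `(K,F,Z,S)` placement delivery array: an `F × K` array whose entries are either `*`
(encoded as `none`) or integers in `[1:S]` (encoded as `some s` with `s : Fin S`). -/
def IsPDA (K F Z S : ℕ) (P : Fin F → Fin K → Option (Fin S)) : Prop :=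
  (∀ k : Fin K, (Finset.univ.filter fun j : Fin F => P j k = none).card = Z) ∧
  (∀ s : Fin S, ∃ (j : Fin F) (k : Fin K), P j k = some s) ∧
  (∀ (j1 j2 : Fin F) (k1 k2 : Fin K) (s : Fin S),
      P j1 k1 = some s → P j2 k2 = some s → (j1, k1) ≠ (j2, k2) →
      P j1 k2 = none ∧ P j2 k1 = none)

/-- A PDA is `g`-regular if each integer appears exactly `g` times. -/
def PDARegular (K F S g : ℕ) (P : Fin F → Fin K → Option (Fin S)) : Prop :=
  ∀ s : Fin S,
    (Finset.univ.filter fun jk : Fin F × Fin K => P jk.1 jk.2 = some s).card = g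

/-- Row `i` is a star row for the integer `s`. -/
def PDAStarRow (K F S : ℕ) (P : Fin F → Fin K → Option (Fin S)) (i : Fin F) (s : Fin S) : Prop :=
  ∀ (j : Fin F) (k : Fin K), P j k = some s → P i k = none

/-- Condition 1 with parameter `lam`. -/
def PDACondition1 (K F Z S lam : ℕ) (P : Fin F → Fin K → Option (Fin S)) : Prop :=
  lam ∣ F ∧ lam ∣ Z ∧
  (∀ (j : Fin F) (k : Fin K),
      P j k = none ↔
        P ⟨j.val % (F / lam), Nat.lt_of_le_of_lt (Nat.mod_le _ _) j.isLt⟩ k = none) ∧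
  ∃ φ : Fin S → Fin (F / lam),
    (∀ s : Fin S, PDAStarRow K F S P (Fin.castLE (Nat.div_le_self F lam) (φ s)) s) ∧
    (∀ j : Fin (F / lam), (Finset.univ.filter fun s : Fin S => φ s = j).card * F = lam * S)

/-- Condition 2: every row contains the same number of stars. -/
def PDACondition2 (K F S : ℕ) (P : Fin F → Fin K → Option (Fin S)) : Prop :=
  ∀ j1 j2 : Fin F,
    (Finset.univ.filter fun k : Fin K => P j1 k = none).card =
    (Finset.univ.filter fun k : Fin K => P j2 k = none).card

section CoThm1Aux
open Finset

private lemma card_filter_snd {A B : Type*} [Fintype A] [Fintype B]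
    (p : B → Prop) [DecidablePred p] :
    (Finset.univ.filter fun x : A × B => p x.2).card
      = Fintype.card A * (Finset.univ.filter p).card := by
  rw [← Fintype.card_subtype, ← Fintype.card_subtype, ← Fintype.card_prod]
  exact Fintype.card_congr
    { toFun := fun x => (x.1.1, ⟨x.1.2, x.2⟩)
      invFun := fun y => ⟨(y.1, y.2.1), y.2.2⟩
      left_inv := fun x => rfl
      right_inv := fun y => rfl }

private lemma card_pi_constraint {m q : ℕ} (i : Fin m) (S : Finset (Fin q)) :
    (Finset.univ.filter fun v : Fin m → Fin q => v i ∈ S).card = S.card * q ^ (m - 1) := by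
  rw [← Fintype.card_subtype]
  have e : {v : Fin m → Fin q // v i ∈ S} ≃ {c : Fin q // c ∈ S} × ({j : Fin m // j ≠ i} → Fin q) :=
    { toFun := fun v => (⟨v.1 i, v.2⟩, fun j => v.1 j.1)
      invFun := fun p => ⟨fun j => if h : j = i then p.1.1 else p.2 ⟨j, h⟩, by simp⟩
      left_inv := fun v => by
        apply Subtype.ext
        funext j
        by_cases h : j = i
        · subst h; simp
        · simp [h]
      right_inv := fun p => by
        refine Prod.ext_iff.mpr ⟨?_, ?_⟩
        · apply Subtype.ext; simp
        · funext j
          simp [j.2] }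
  rw [Fintype.card_congr e, Fintype.card_prod, Fintype.card_fun]
  have h1 : Fintype.card {c : Fin q // c ∈ S} = S.card := Fintype.card_coe S
  have h2 : Fintype.card {j : Fin m // j ≠ i} = m - 1 := by
    have := Fintype.card_subtype_compl (fun j : Fin m => j = i)
    rw [Fintype.card_subtype_eq, Fintype.card_fin] at this
    exact this
  rw [h1, h2, Fintype.card_fin]

private lemma optmap_equiv_eq_some {α β : Type*} (e : α ≃ β) (o : Option α) (b : β) :
    o.map e = some b ↔ o = some (e.symm b) := by
  cases o with
  | none => simp
  | some a =>
    simp only [Option.map_some, Option.some.injEq]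
    exact ⟨fun h => by rw [← h, Equiv.symm_apply_apply], fun h => by rw [h, Equiv.apply_symm_apply]⟩

private def QCore {K1 F1 S1 lam q fib m : ℕ} (P : Fin F1 → Fin K1 → Option (Fin S1))
    (φ : Fin S1 → Fin q) (Θ : Fin S1 ≃ Fin q × Fin fib) (re : Fin lam × Fin q ≃ Fin F1)
    (x : Fin lam × (Fin m → Fin q)) (y : Fin m × Fin K1) :
    Option ((Fin m → Fin q) × Fin fib) :=
  (P (re (x.1, x.2 y.1)) y.2).map fun s => (Function.update x.2 y.1 (φ s), (Θ s).2)

private lemma QCore_eq_some {K1 F1 S1 lam q fib m : ℕ}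
    {P : Fin F1 → Fin K1 → Option (Fin S1)} {φ : Fin S1 → Fin q}
    {Θ : Fin S1 ≃ Fin q × Fin fib} (hΘ1 : ∀ s, (Θ s).1 = φ s)
    {re : Fin lam × Fin q ≃ Fin F1}
    {x : Fin lam × (Fin m → Fin q)} {y : Fin m × Fin K1}
    {v : Fin m → Fin q} {t : Fin fib}
    (h : QCore P φ Θ re x y = some (v, t)) :
    P (re (x.1, x.2 y.1)) y.2 = some (Θ.symm (v y.1, t))
      ∧ v y.1 = φ (Θ.symm (v y.1, t))
      ∧ ∀ l, l ≠ y.1 → x.2 l = v l := by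
  rw [QCore, Option.map_eq_some_iff] at h
  obtain ⟨s, hs, hmap⟩ := h
  have hv : Function.update x.2 y.1 (φ s) = v := congrArg Prod.fst hmap
  have ht : (Θ s).2 = t := congrArg Prod.snd hmap
  have hvy : v y.1 = φ s := by rw [← hv, Function.update_self]
  have hΘs : Θ s = (v y.1, t) := Prod.ext_iff.mpr ⟨by rw [hΘ1 s, hvy], ht⟩
  have hsid : s = Θ.symm (v y.1, t) := by rw [← hΘs, Equiv.symm_apply_apply]
  refine ⟨by rw [← hsid]; exact hs, by rw [← hsid]; exact hvy, fun l hl => ?_⟩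
  rw [← hv]
  exact (Function.update_of_ne hl _ _).symm

private lemma QCore_intro {K1 F1 S1 lam q fib m : ℕ}
    {P : Fin F1 → Fin K1 → Option (Fin S1)} {φ : Fin S1 → Fin q}
    {Θ : Fin S1 ≃ Fin q × Fin fib} (hΘ1 : ∀ s, (Θ s).1 = φ s)
    {re : Fin lam × Fin q ≃ Fin F1}
    (δ : Fin lam) (c : Fin q) (v : Fin m → Fin q) (t : Fin fib) (i : Fin m) (k : Fin K1)
    (h : P (re (δ, c)) k = some (Θ.symm (v i, t))) :
    QCore P φ Θ re (δ, Function.update v i c) (i, k) = some (v, t) := by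
  have hφψ : φ (Θ.symm (v i, t)) = v i := by
    have := hΘ1 (Θ.symm (v i, t))
    rw [Equiv.apply_symm_apply] at this
    exact this.symm
  rw [QCore]
  simp only
  rw [Function.update_self, h, Option.map_some]
  congr 1
  refine Prod.ext_iff.mpr ⟨?_, ?_⟩
  · show Function.update (Function.update v i c) i (φ (Θ.symm (v i, t))) = v
    rw [Function.update_idem, hφψ, Function.update_eq_self]
  · show (Θ (Θ.symm (v i, t))).2 = t
    rw [Equiv.apply_symm_apply]

end CoThm1Aux

open Finset in
/-- Corollary 1: if there is a `g`-regular `(K1,F1,Z1,S1)` PDA with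
`g = K1(F1-Z1)/S1` a positive integer, satisfying Condition 1 with parameter `lam`, then for
every positive integer `m` there is an `(m·g)`-regular
`(m·K1, lam·(F1/lam)^m, Z1·(F1/lam)^(m-1), S1·(F1/lam)^(m-1))` PDA. -/
theorem cothm1 (K1 F1 Z1 S1 lam g : ℕ)
    (hK1 : 0 < K1) (hF1 : 0 < F1) (hZ1 : 0 < Z1) (hS1 : 0 < S1) (hlam : 0 < lam)
    (hZF : Z1 < F1) (hg : 0 < g) (hgdef : g * S1 = K1 * (F1 - Z1))
    (hex : ∃ P : Fin F1 → Fin K1 → Option (Fin S1),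
        IsPDA K1 F1 Z1 S1 P ∧ PDARegular K1 F1 S1 g P ∧
          PDACondition1 K1 F1 Z1 S1 lam P) :
    ∀ m : ℕ, 0 < m →
      ∃ Q : Fin (lam * (F1 / lam) ^ m) → Fin (m * K1) →
            Option (Fin (S1 * (F1 / lam) ^ (m - 1))),
        IsPDA (m * K1) (lam * (F1 / lam) ^ m) (Z1 * (F1 / lam) ^ (m - 1))
          (S1 * (F1 / lam) ^ (m - 1)) Q ∧
        PDARegular (m * K1) (lam * (F1 / lam) ^ m) (S1 * (F1 / lam) ^ (m - 1)) (m * g) Q := by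
  obtain ⟨P, ⟨hC1P, hC2P, hC3P⟩, hregP, hdvdF, hdvdZ, hper, φ, hφrow, hφfib⟩ := hex
  intro m hm
  classical
  have hF1eq : lam * (F1 / lam) = F1 := Nat.mul_div_cancel' hdvdF
  have hq : 0 < F1 / lam := Nat.div_pos (Nat.le_of_dvd hF1 hdvdF) hlam
  -- fibers of φ
  have hfib' : ∀ j : Fin (F1 / lam),
      (Finset.univ.filter fun s : Fin S1 => φ s = j).card * (F1 / lam) = S1 := by
    intro j
    refine Nat.eq_of_mul_eq_mul_left hlam ?_
    calc lam * ((Finset.univ.filter fun s : Fin S1 => φ s = j).card * (F1 / lam))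
        = (Finset.univ.filter fun s : Fin S1 => φ s = j).card * (lam * (F1 / lam)) := by ring
      _ = (Finset.univ.filter fun s : Fin S1 => φ s = j).card * F1 := by rw [hF1eq]
      _ = lam * S1 := hφfib j
  obtain ⟨fib, hfib_card, hfibq⟩ : ∃ fib : ℕ,
      (∀ j : Fin (F1 / lam), (Finset.univ.filter fun s : Fin S1 => φ s = j).card = fib)
        ∧ fib * (F1 / lam) = S1 := by
    refine ⟨(Finset.univ.filter fun s : Fin S1 => φ s = (⟨0, hq⟩ : Fin (F1 / lam))).card,
      fun j => Nat.eq_of_mul_eq_mul_right hq ((hfib' j).trans (hfib' _).symm), hfib' _⟩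
  -- the equiv Θ
  have hcardfiber : ∀ j : Fin (F1 / lam), Fintype.card {s : Fin S1 // φ s = j} = fib := fun j => by
    rw [Fintype.card_subtype]; exact hfib_card j
  obtain ⟨Θ, hΘ1⟩ : ∃ Θ : Fin S1 ≃ Fin (F1 / lam) × Fin fib, ∀ s, (Θ s).1 = φ s :=
    ⟨((Equiv.sigmaFiberEquiv φ).symm.trans
        (Equiv.sigmaCongrRight fun j => Fintype.equivFinOfCardEq (hcardfiber j))).trans
        (Equiv.sigmaEquivProd (Fin (F1 / lam)) (Fin fib)), fun s => rfl⟩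
  have hΘsymm1 : ∀ (u : Fin (F1 / lam)) (t : Fin fib), φ (Θ.symm (u, t)) = u := by
    intro u t
    have := hΘ1 (Θ.symm (u, t))
    rw [Equiv.apply_symm_apply] at this
    exact this.symm
  -- row equiv and class lift
  obtain ⟨re, hre_val⟩ : ∃ re : Fin lam × Fin (F1 / lam) ≃ Fin F1,
      ∀ (δ : Fin lam) (c : Fin (F1 / lam)), ((re (δ, c)) : ℕ) = c + (F1 / lam) * δ :=
    ⟨finProdFinEquiv.trans (finCongr hF1eq), fun δ c => rfl⟩
  obtain ⟨clift, hφrow', hclift_val⟩ : ∃ clift : Fin (F1 / lam) → Fin F1,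
      (∀ (s : Fin S1) (j : Fin F1) (k : Fin K1), P j k = some s → P (clift (φ s)) k = none)
        ∧ ∀ c : Fin (F1 / lam), ((clift c : ℕ) = c) :=
    ⟨Fin.castLE (Nat.div_le_self F1 lam), fun s j k h => hφrow s j k h, fun c => rfl⟩
  have hper' : ∀ (r : Fin F1) (k : Fin K1) (c : Fin (F1 / lam)), (r : ℕ) % (F1 / lam) = (c : ℕ) →
      (P r k = none ↔ P (clift c) k = none) := by
    intro r k c hc
    refine (hper r k).trans (Eq.to_iff (congrArg (fun x => P x k = none) (Fin.ext ?_)))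
    rw [hclift_val c]
    exact hc
  have hstar_iff : ∀ (δ : Fin lam) (c : Fin (F1 / lam)) (k : Fin K1),
      (P (re (δ, c)) k = none) ↔ (P (clift c) k = none) := by
    intro δ c k
    refine hper' (re (δ, c)) k c ?_
    rw [hre_val, Nat.add_mul_mod_self_left, Nat.mod_eq_of_lt c.isLt]
  -- star class sets
  have hSkcard : ∀ k, lam * (Finset.univ.filter fun c : Fin (F1 / lam) =>
      P (clift c) k = none).card = Z1 := by
    intro k
    have h1 : (Finset.univ.filter fun x : Fin lam × Fin (F1 / lam) => P (re x) k = none).card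
        = (Finset.univ.filter fun r : Fin F1 => P r k = none).card := by
      refine Finset.card_equiv re ?_
      intro x
      simp
    have h2 : (Finset.univ.filter fun x : Fin lam × Fin (F1 / lam) => P (re x) k = none)
        = (Finset.univ.filter fun x : Fin lam × Fin (F1 / lam) => P (clift x.2) k = none) := by
      apply Finset.filter_congr
      intro x _
      obtain ⟨a, b⟩ := x
      exact hstar_iff a b k
    rw [h2, card_filter_snd (fun c : Fin (F1 / lam) => P (clift c) k = none),
      Fintype.card_fin] at h1
    rw [hC1P k] at h1
    exact h1
  -- the equivalences for the big array
  obtain ⟨eR⟩ : Nonempty ((Fin lam × (Fin m → Fin (F1 / lam))) ≃ Fin (lam * (F1 / lam) ^ m)) :=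
    ⟨(Equiv.prodCongr (Equiv.refl (Fin lam)) finFunctionFinEquiv).trans finProdFinEquiv⟩
  let eC : (Fin m × Fin K1) ≃ Fin (m * K1) := finProdFinEquiv
  have hSeq : (F1 / lam) ^ m * fib = S1 * (F1 / lam) ^ (m - 1) := by
    calc (F1 / lam) ^ m * fib = (F1 / lam) ^ (m - 1 + 1) * fib := by
          rw [Nat.sub_add_cancel hm]
      _ = (F1 / lam) ^ (m - 1) * (F1 / lam) * fib := by rw [pow_succ]
      _ = (fib * (F1 / lam)) * (F1 / lam) ^ (m - 1) := by ring
      _ = S1 * (F1 / lam) ^ (m - 1) := by rw [hfibq]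
  obtain ⟨eS⟩ : Nonempty (((Fin m → Fin (F1 / lam)) × Fin fib) ≃ Fin (S1 * (F1 / lam) ^ (m - 1))) :=
    ⟨((Equiv.prodCongr finFunctionFinEquiv (Equiv.refl (Fin fib))).trans finProdFinEquiv).trans
      (finCongr hSeq)⟩
  refine ⟨fun j k => (QCore P φ Θ re (eR.symm j) (eC.symm k)).map eS, ⟨?_, ?_, ?_⟩, ?_⟩
  · -- C1 : star count per column
    intro k
    beta_reduce
    have hstep1 : (Finset.univ.filter fun j : Fin (lam * (F1 / lam) ^ m) =>
        (QCore P φ Θ re (eR.symm j) (eC.symm k)).map eS = none).card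
        = (Finset.univ.filter fun x : Fin lam × (Fin m → Fin (F1 / lam)) =>
            x.2 (eC.symm k).1 ∈ (Finset.univ.filter fun c : Fin (F1 / lam) =>
              P (clift c) (eC.symm k).2 = none)).card := by
      refine Finset.card_equiv eR.symm ?_
      intro j
      simp only [Finset.mem_filter, Finset.mem_univ, true_and, Option.map_eq_none_iff]
      rw [QCore, Option.map_eq_none_iff]
      rw [hstar_iff (eR.symm j).1 ((eR.symm j).2 (eC.symm k).1) (eC.symm k).2]
    rw [hstep1, card_filter_snd (fun v : Fin m → Fin (F1 / lam) =>
        v (eC.symm k).1 ∈ (Finset.univ.filter fun c : Fin (F1 / lam) =>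
          P (clift c) (eC.symm k).2 = none)), Fintype.card_fin,
      card_pi_constraint, ← mul_assoc, hSkcard]
  · -- C2 : every symbol occurs
    intro σ
    obtain ⟨r, k, hr⟩ := hC2P (Θ.symm ((eS.symm σ).1 ⟨0, hm⟩, (eS.symm σ).2))
    refine ⟨eR ((re.symm r).1, Function.update (eS.symm σ).1 ⟨0, hm⟩ (re.symm r).2),
      eC (⟨0, hm⟩, k), ?_⟩
    beta_reduce
    rw [Equiv.symm_apply_apply, Equiv.symm_apply_apply]
    have hQ : QCore P φ Θ re ((re.symm r).1, Function.update (eS.symm σ).1 ⟨0, hm⟩ (re.symm r).2)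
        (⟨0, hm⟩, k) = some ((eS.symm σ).1, (eS.symm σ).2) := by
      refine QCore_intro hΘ1 _ _ _ _ _ _ ?_
      have : re ((re.symm r).1, (re.symm r).2) = r := by
        rw [show ((re.symm r).1, (re.symm r).2) = re.symm r from rfl, Equiv.apply_symm_apply]
      rw [this]
      exact hr
    rw [hQ, Option.map_some]
    rw [show ((eS.symm σ).1, (eS.symm σ).2) = eS.symm σ from rfl, Equiv.apply_symm_apply]
  · -- C3
    intro j1 j2 k1 k2 σ h1 h2 hne
    beta_reduce at h1 h2 ⊢
    have hq1 : QCore P φ Θ re (eR.symm j1) (eC.symm k1) = some ((eS.symm σ).1, (eS.symm σ).2) := by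
      rw [show ((eS.symm σ).1, (eS.symm σ).2) = eS.symm σ from rfl]
      exact (optmap_equiv_eq_some eS _ σ).mp h1
    have hq2 : QCore P φ Θ re (eR.symm j2) (eC.symm k2) = some ((eS.symm σ).1, (eS.symm σ).2) := by
      rw [show ((eS.symm σ).1, (eS.symm σ).2) = eS.symm σ from rfl]
      exact (optmap_equiv_eq_some eS _ σ).mp h2
    obtain ⟨hP1, hv1, hoff1⟩ := QCore_eq_some hΘ1 hq1
    obtain ⟨hP2, hv2, hoff2⟩ := QCore_eq_some hΘ1 hq2
    set x1 := eR.symm j1 with hx1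
    set x2 := eR.symm j2 with hx2
    set y1 := eC.symm k1 with hy1
    set y2 := eC.symm k2 with hy2
    set v := (eS.symm σ).1 with hvdef
    set t := (eS.symm σ).2 with htdef
    constructor
    · -- Q j1 k2 = none
      rw [Option.map_eq_none_iff, QCore, Option.map_eq_none_iff]
      by_cases hii : y1.1 = y2.1
      · -- same block
        have hs12 : Θ.symm (v y1.1, t) = Θ.symm (v y2.1, t) := by rw [hii]
        by_cases heqpos : re (x1.1, x1.2 y1.1) = re (x2.1, x2.2 y2.1) ∧ y1.2 = y2.2
        · exfalso
          obtain ⟨hre12, hk12⟩ := heqpos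
          have hpair : (x1.1, x1.2 y1.1) = (x2.1, x2.2 y2.1) := re.injective hre12
          obtain ⟨hδ, hc⟩ := Prod.mk.inj hpair
          have hfun : x1.2 = x2.2 := by
            funext l
            by_cases hl : l = y1.1
            · subst hl
              rw [hc]
              exact congrArg x2.2 hii.symm
            · rw [hoff1 l hl, ← hoff2 l (fun hcon => hl (hcon.trans hii.symm))]
          have hxx : x1 = x2 := Prod.ext_iff.mpr ⟨hδ, hfun⟩
          have hyy : y1 = y2 := Prod.ext_iff.mpr ⟨hii, hk12⟩
          apply hne
          have hj : j1 = j2 := by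
            rw [← Equiv.apply_symm_apply eR j1, ← Equiv.apply_symm_apply eR j2, ← hx1, ← hx2, hxx]
          have hk : k1 = k2 := by
            rw [← Equiv.apply_symm_apply eC k1, ← Equiv.apply_symm_apply eC k2, ← hy1, ← hy2, hyy]
          rw [hj, hk]
        · have hPne : ((re (x1.1, x1.2 y1.1), y1.2) : Fin F1 × Fin K1)
              ≠ (re (x2.1, x2.2 y2.1), y2.2) := by
            intro hcon
            exact heqpos (Prod.mk.inj hcon)
          have hP2' : P (re (x2.1, x2.2 y2.1)) y2.2 = some (Θ.symm (v y1.1, t)) := by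
            rw [hs12]; exact hP2
          have h3 := hC3P _ _ _ _ _ hP1 hP2' hPne
          rw [← hii]
          exact h3.1
      · -- different blocks
        have h1' : x1.2 y2.1 = v y2.1 := hoff1 _ (fun h => hii h.symm)
        rw [h1', hv2]
        exact (hstar_iff x1.1 _ y2.2).mpr (hφrow' _ _ _ hP2)
    · -- Q j2 k1 = none
      rw [Option.map_eq_none_iff, QCore, Option.map_eq_none_iff]
      by_cases hii : y1.1 = y2.1
      · have hs12 : Θ.symm (v y1.1, t) = Θ.symm (v y2.1, t) := by rw [hii]
        by_cases heqpos : re (x1.1, x1.2 y1.1) = re (x2.1, x2.2 y2.1) ∧ y1.2 = y2.2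
        · exfalso
          obtain ⟨hre12, hk12⟩ := heqpos
          have hpair : (x1.1, x1.2 y1.1) = (x2.1, x2.2 y2.1) := re.injective hre12
          obtain ⟨hδ, hc⟩ := Prod.mk.inj hpair
          have hfun : x1.2 = x2.2 := by
            funext l
            by_cases hl : l = y1.1
            · subst hl
              rw [hc]
              exact congrArg x2.2 hii.symm
            · rw [hoff1 l hl, ← hoff2 l (fun hcon => hl (hcon.trans hii.symm))]
          have hxx : x1 = x2 := Prod.ext_iff.mpr ⟨hδ, hfun⟩
          have hyy : y1 = y2 := Prod.ext_iff.mpr ⟨hii, hk12⟩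
          apply hne
          have hj : j1 = j2 := by
            rw [← Equiv.apply_symm_apply eR j1, ← Equiv.apply_symm_apply eR j2, ← hx1, ← hx2, hxx]
          have hk : k1 = k2 := by
            rw [← Equiv.apply_symm_apply eC k1, ← Equiv.apply_symm_apply eC k2, ← hy1, ← hy2, hyy]
          rw [hj, hk]
        · have hPne : ((re (x1.1, x1.2 y1.1), y1.2) : Fin F1 × Fin K1)
              ≠ (re (x2.1, x2.2 y2.1), y2.2) := by
            intro hcon
            exact heqpos (Prod.mk.inj hcon)
          have hP2' : P (re (x2.1, x2.2 y2.1)) y2.2 = some (Θ.symm (v y1.1, t)) := by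
            rw [hs12]; exact hP2
          have h3 := hC3P _ _ _ _ _ hP1 hP2' hPne
          rw [hii]
          exact h3.2
      · have h2' : x2.2 y1.1 = v y1.1 := hoff2 _ hii
        rw [h2', hv1]
        exact (hstar_iff x2.1 _ y1.2).mpr (hφrow' _ _ _ hP1)
  · -- regularity
    intro σ
    beta_reduce
    have hA : (Finset.univ.filter fun jk : Fin (lam * (F1 / lam) ^ m) × Fin (m * K1) =>
        (QCore P φ Θ re (eR.symm jk.1) (eC.symm jk.2)).map eS = some σ).card
        = (Finset.univ.filter
            fun xy : (Fin lam × (Fin m → Fin (F1 / lam))) × (Fin m × Fin K1) =>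
              QCore P φ Θ re xy.1 xy.2 = some ((eS.symm σ).1, (eS.symm σ).2)).card := by
      refine Finset.card_equiv (Equiv.prodCongr eR.symm eC.symm) ?_
      intro jk
      simp only [Finset.mem_filter, Finset.mem_univ, true_and, Equiv.prodCongr_apply,
        Prod.map_fst, Prod.map_snd]
      rw [show (((eS.symm σ).1, (eS.symm σ).2) : (Fin m → Fin (F1 / lam)) × Fin fib)
        = eS.symm σ from rfl]
      exact optmap_equiv_eq_some eS _ σ
    rw [hA]
    rw [Finset.card_eq_sum_card_fiberwise
      (f := fun xy : (Fin lam × (Fin m → Fin (F1 / lam))) × (Fin m × Fin K1) => xy.2.1)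
      (t := Finset.univ) (fun x _ => Finset.mem_univ _)]
    have hB : ∀ i : Fin m,
        ((Finset.univ.filter
            fun xy : (Fin lam × (Fin m → Fin (F1 / lam))) × (Fin m × Fin K1) =>
              QCore P φ Θ re xy.1 xy.2 = some ((eS.symm σ).1, (eS.symm σ).2)).filter
          fun xy => xy.2.1 = i).card = g := by
      intro i
      rw [Finset.filter_filter, ← hregP (Θ.symm ((eS.symm σ).1 i, (eS.symm σ).2))]
      refine Finset.card_nbij'
        (i := fun xy : (Fin lam × (Fin m → Fin (F1 / lam))) × (Fin m × Fin K1) =>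
          ((re (xy.1.1, xy.1.2 xy.2.1), xy.2.2) : Fin F1 × Fin K1))
        (j := fun rk : Fin F1 × Fin K1 =>
          (((re.symm rk.1).1, Function.update (eS.symm σ).1 i (re.symm rk.1).2), (i, rk.2)))
        ?_ ?_ ?_ ?_
      · intro a ha
        simp only [Finset.mem_coe, Finset.mem_filter, Finset.mem_univ, true_and] at ha ⊢
        obtain ⟨hsome, hblock⟩ := ha
        obtain ⟨hP', hv', hoff'⟩ := QCore_eq_some hΘ1 hsome
        rw [← hblock]
        exact hP'
      · intro rk hrk
        simp only [Finset.mem_coe, Finset.mem_filter, Finset.mem_univ, true_and] at hrk ⊢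
        refine ⟨?_, by trivial⟩
        refine QCore_intro hΘ1 _ _ _ _ _ _ ?_
        rw [show (((re.symm rk.1).1, (re.symm rk.1).2) : Fin lam × Fin (F1 / lam))
          = re.symm rk.1 from rfl, Equiv.apply_symm_apply]
        exact hrk
      · intro a ha
        simp only [Finset.mem_coe, Finset.mem_filter, Finset.mem_univ, true_and] at ha
        obtain ⟨hsome, hblock⟩ := ha
        obtain ⟨hP', hv', hoff'⟩ := QCore_eq_some hΘ1 hsome
        have hre2 : re.symm (re (a.1.1, a.1.2 a.2.1)) = (a.1.1, a.1.2 a.2.1) :=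
          Equiv.symm_apply_apply _ _
        have hupd : Function.update (eS.symm σ).1 i (a.1.2 a.2.1) = a.1.2 := by
          subst hblock
          funext l
          by_cases hl : l = a.2.1
          · subst hl; rw [Function.update_self]
          · rw [Function.update_of_ne hl]
            exact (hoff' l hl).symm
        calc (((re.symm (re (a.1.1, a.1.2 a.2.1))).1,
              Function.update (eS.symm σ).1 i (re.symm (re (a.1.1, a.1.2 a.2.1))).2),
              ((i, a.2.2) : Fin m × Fin K1))
            = ((a.1.1, Function.update (eS.symm σ).1 i (a.1.2 a.2.1)), (i, a.2.2)) := by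
              rw [hre2]
          _ = ((a.1.1, a.1.2), (a.2.1, a.2.2)) := by rw [hupd, hblock]
          _ = a := rfl
      · intro rk hrk
        simp only [Finset.mem_coe, Finset.mem_filter, Finset.mem_univ, true_and] at hrk
        refine Prod.ext_iff.mpr ⟨?_, rfl⟩
        simp only [Function.update_self]
        rw [show (((re.symm rk.1).1, (re.symm rk.1).2) : Fin lam × Fin (F1 / lam))
          = re.symm rk.1 from rfl, Equiv.apply_symm_apply]
    rw [Finset.sum_congr rfl (fun i _ => hB i), Finset.sum_const, Finset.card_univ,
      Fintype.card_fin, smul_eq_mul]
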